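/- Let H be a Hilbert space, μ > 1, C > 0, and let x₀,...,x_N ∈ H and b ∈ H satisfy ‖b − xᵢ‖ ≤ μ⁻ⁱ C for all i ≤ l, for some l ∈ {0,...,N−1}. Let k = max{ i ∈ {0,...,N} : ‖xᵢ − xⱼ‖ ≤ 4C/μʲ for all j = 0,...,i }. Then l ≤ k and ‖b − x_k‖ ≤ 6C/μˡ. -/

import Mathlib

/-- Abstract adaptive (balancing) principle: if `‖b − xᵢ‖ ≤ C/μⁱ` for all
`i ≤ l` (with `l ≤ N−1`), and
`k = max{ i ≤ N : ‖xᵢ − xⱼ‖ ≤ 4C/μʲ for all j ≤ i }`, then `l ≤ k` and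
`‖b − x_k‖ ≤ 6C/μˡ`. -/
theorem stmt14 {H : Type*} [NormedAddCommGroup H] [InnerProductSpace ℝ H]
    (N : ℕ) (x : ℕ → H) (b : H) (μ C : ℝ) (hμ : 1 < μ) (hC : 0 < C)
    (l : ℕ) (hl : l + 1 ≤ N)
    (hb : ∀ i ≤ l, ‖b - x i‖ ≤ C / μ ^ i)
    (k : ℕ)
    (hk : IsGreatest {i : ℕ | i ≤ N ∧ ∀ j ≤ i, ‖x i - x j‖ ≤ 4 * C / μ ^ j} k) :
    l ≤ k ∧ ‖b - x k‖ ≤ 6 * C / μ ^ l := by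
  have hμ0 : (0:ℝ) < μ := lt_trans one_pos hμ
  have hpow : ∀ j : ℕ, (0:ℝ) < μ ^ j := fun j => pow_pos hμ0 j
  have hmono : ∀ {i j : ℕ}, j ≤ i → C / μ ^ i ≤ C / μ ^ j := by
    intro i j hji
    exact div_le_div_of_nonneg_left hC.le (hpow j) (pow_le_pow_right₀ hμ.le hji)
  have hlmem : l ∈ {i : ℕ | i ≤ N ∧ ∀ j ≤ i, ‖x i - x j‖ ≤ 4 * C / μ ^ j} := by
    refine ⟨le_trans (Nat.le_succ l) hl, fun j hj => ?_⟩
    have h1 : ‖x l - x j‖ ≤ ‖b - x l‖ + ‖b - x j‖ := by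
      have := norm_sub_le (b - x j) (b - x l)
      have h' : ‖x l - x j‖ ≤ ‖b - x j‖ + ‖b - x l‖ := by
        simpa [norm_sub_rev, sub_sub_sub_cancel_left] using this
      linarith
    have h2 : ‖b - x l‖ ≤ C / μ ^ j := (hb l le_rfl).trans (hmono hj)
    have h3 : ‖b - x j‖ ≤ C / μ ^ j := hb j hj
    have : ‖x l - x j‖ ≤ 2 * (C / μ ^ j) := by linarith
    refine this.trans ?_
    rw [mul_div_assoc]
    have := div_pos hC (hpow j)
    linarith
  have hlk : l ≤ k := hk.2 hlmem
  refine ⟨hlk, ?_⟩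
  have h1 : ‖b - x k‖ ≤ ‖b - x l‖ + ‖x k - x l‖ := by
    have := norm_add_le (b - x l) (x l - x k)
    rw [norm_sub_rev (x k) (x l)]
    simpa [sub_add_sub_cancel] using this
  have h2 : ‖b - x l‖ ≤ C / μ ^ l := hb l le_rfl
  have h3 : ‖x k - x l‖ ≤ 4 * C / μ ^ l := hk.1.2 l hlk
  have h4 : C / μ ^ l + 4 * C / μ ^ l ≤ 6 * C / μ ^ l := by
    rw [← add_div, div_le_div_iff₀ (hpow l) (hpow l)]
    nlinarith [hpow l]
  linarith
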